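/- Let I ⊆ ℝ be an open interval, F : I → ℝ a function, and let f, g : I → ℝ be three times differentiable functions with f' and g' nonvanishing on I, satisfying S(f)(s) = F(s) = S(g)(s) for all s ∈ I. Then there exist real numbers a, b, c, d with ad − bc ≠ 0 such that c·f(s) + d ≠ 0 and g(s) = (a·f(s) + b)/(c·f(s) + d) for all s ∈ I; that is, two solutions of the same Schwarzian equation differ by post-composition with a homographic transformation. -/

import Mathlib

/-- The Schwarzian derivative `S(f) = f'''/f' - (3/2)(f''/f')²`. -/
noncomputable def schwarzian (f : ℝ → ℝ) (s : ℝ) : ℝ :=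
  deriv (deriv (deriv f)) s / deriv f s - 3 / 2 * (deriv (deriv f) s / deriv f s) ^ 2

private lemma const_of_deriv_zero {I : Set ℝ} (hIopen : IsOpen I) (hconv : Convex ℝ I)
    {h : ℝ → ℝ} (hd : ∀ s ∈ I, HasDerivAt h 0 s) {x y : ℝ} (hx : x ∈ I) (hy : y ∈ I) :
    h x = h y := by
  refine hconv.is_const_of_fderivWithin_eq_zero
    (fun s hs => ((hd s hs).differentiableAt).differentiableWithinAt)
    (fun s hs => ?_) hx hy
  rw [fderivWithin_of_isOpen hIopen hs, (hd s hs).hasFDerivAt.fderiv]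
  ext z
  simp

private lemma schwarzian_aux {I : Set ℝ} {F f : ℝ → ℝ} {ε : ℝ}
    (hε : ε = 1 ∨ ε = -1)
    (hf1 : ∀ s ∈ I, DifferentiableAt ℝ f s)
    (hf2 : ∀ s ∈ I, DifferentiableAt ℝ (deriv f) s)
    (hf3 : ∀ s ∈ I, DifferentiableAt ℝ (deriv (deriv f)) s)
    (hpos : ∀ s ∈ I, 0 < ε * deriv f s)
    (hS : ∀ s ∈ I, schwarzian f s = F s) :
    ∃ u u' B B' : ℝ → ℝ,
      (∀ s ∈ I, 0 < u s) ∧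
      (∀ s ∈ I, HasDerivAt u (u' s) s) ∧
      (∀ s ∈ I, HasDerivAt u' (-(F s / 2) * u s) s) ∧
      (∀ s, B s = f s * u s) ∧
      (∀ s ∈ I, HasDerivAt B (B' s) s) ∧
      (∀ s ∈ I, HasDerivAt B' (-(F s / 2) * B s) s) ∧
      (∀ s ∈ I, u s * B' s - u' s * B s = ε) := by
  have hx0 : ∀ s ∈ I, ε * deriv f s ≠ 0 := fun s hs => ne_of_gt (hpos s hs)
  have hd1 : ∀ s ∈ I, deriv f s ≠ 0 := fun s hs => right_ne_zero_of_mul (hx0 s hs)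
  have hP : ∀ s ∈ I, HasDerivAt (fun t => ε * deriv f t) (ε * deriv (deriv f) s) s :=
    fun s hs => ((hf2 s hs).hasDerivAt).const_mul ε
  have hQ : ∀ s ∈ I, HasDerivAt (fun t => ε * deriv (deriv f) t)
      (ε * deriv (deriv (deriv f)) s) s :=
    fun s hs => ((hf3 s hs).hasDerivAt).const_mul ε
  have hupos : ∀ s ∈ I, 0 < (ε * deriv f s) ^ (-(1/2) : ℝ) :=
    fun s hs => Real.rpow_pos_of_pos (hpos s hs) _
  have hud : ∀ s ∈ I, HasDerivAt (fun t => (ε * deriv f t) ^ (-(1/2) : ℝ))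
      (ε * deriv (deriv f) s * (-(1/2) : ℝ) * (ε * deriv f s) ^ (-(1/2) - 1 : ℝ)) s :=
    fun s hs => (hP s hs).rpow_const (Or.inl (hx0 s hs))
  have e1 : ∀ s ∈ I, (ε * deriv f s) ^ (-(1/2) - 1 : ℝ)
      = (ε * deriv f s) ^ (-(1/2) : ℝ) / (ε * deriv f s) := by
    intro s hs
    rw [Real.rpow_sub (hpos s hs), Real.rpow_one]
  have e2 : ∀ s ∈ I, (ε * deriv f s) ^ (-(1/2) - 1 - 1 : ℝ)
      = (ε * deriv f s) ^ (-(1/2) : ℝ) / (ε * deriv f s) / (ε * deriv f s) := by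
    intro s hs
    rw [Real.rpow_sub (hpos s hs), Real.rpow_sub (hpos s hs), Real.rpow_one]
  have e3 : ∀ s ∈ I, (ε * deriv f s) ^ (-(1/2) : ℝ) * (ε * deriv f s) ^ (-(1/2) : ℝ)
      = (ε * deriv f s)⁻¹ := by
    intro s hs
    rw [← Real.rpow_add (hpos s hs)]
    norm_num [Real.rpow_neg_one]
  have hud2 : ∀ s ∈ I, HasDerivAt
      (fun t => ε * deriv (deriv f) t * (-(1/2) : ℝ) * (ε * deriv f t) ^ (-(1/2) - 1 : ℝ))
      (-(F s / 2) * (ε * deriv f s) ^ (-(1/2) : ℝ)) s := by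
    intro s hs
    have h1 : HasDerivAt (fun t => ε * deriv (deriv f) t * (-(1/2) : ℝ))
        (ε * deriv (deriv (deriv f)) s * (-(1/2) : ℝ)) s := (hQ s hs).mul_const _
    have h2 : HasDerivAt (fun t => (ε * deriv f t) ^ (-(1/2) - 1 : ℝ))
        (ε * deriv (deriv f) s * (-(1/2) - 1 : ℝ) * (ε * deriv f s) ^ (-(1/2) - 1 - 1 : ℝ)) s :=
      (hP s hs).rpow_const (Or.inl (hx0 s hs))
    have h3 := h1.mul h2
    refine h3.congr_deriv ?_
    rw [e1 s hs, e2 s hs, ← hS s hs]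
    simp only [schwarzian]
    have hd := hd1 s hs
    rcases hε with rfl | rfl <;> field_simp <;> ring
  have hBd : ∀ s ∈ I, HasDerivAt (fun t => f t * (ε * deriv f t) ^ (-(1/2) : ℝ))
      (deriv f s * (ε * deriv f s) ^ (-(1/2) : ℝ)
        + f s * (ε * deriv (deriv f) s * (-(1/2) : ℝ) * (ε * deriv f s) ^ (-(1/2) - 1 : ℝ))) s :=
    fun s hs => ((hf1 s hs).hasDerivAt).mul (hud s hs)
  have hBd2 : ∀ s ∈ I, HasDerivAt
      (fun t => deriv f t * (ε * deriv f t) ^ (-(1/2) : ℝ)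
        + f t * (ε * deriv (deriv f) t * (-(1/2) : ℝ) * (ε * deriv f t) ^ (-(1/2) - 1 : ℝ)))
      (-(F s / 2) * (f s * (ε * deriv f s) ^ (-(1/2) : ℝ))) s := by
    intro s hs
    have h1 := ((hf2 s hs).hasDerivAt).mul (hud s hs)
    have h2 := ((hf1 s hs).hasDerivAt).mul (hud2 s hs)
    have h3 := h1.add h2
    refine h3.congr_deriv ?_
    rw [e1 s hs]
    have hd := hd1 s hs
    rcases hε with rfl | rfl <;> field_simp <;> ring
  have hWr : ∀ s ∈ I, (ε * deriv f s) ^ (-(1/2) : ℝ)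
        * (deriv f s * (ε * deriv f s) ^ (-(1/2) : ℝ)
          + f s * (ε * deriv (deriv f) s * (-(1/2) : ℝ) * (ε * deriv f s) ^ (-(1/2) - 1 : ℝ)))
      - (ε * deriv (deriv f) s * (-(1/2) : ℝ) * (ε * deriv f s) ^ (-(1/2) - 1 : ℝ))
        * (f s * (ε * deriv f s) ^ (-(1/2) : ℝ)) = ε := by
    intro s hs
    have hd := hd1 s hs
    have key : deriv f s * ((ε * deriv f s) ^ (-(1/2) : ℝ) * (ε * deriv f s) ^ (-(1/2) : ℝ)) = ε := by
      rw [e3 s hs]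
      rcases hε with rfl | rfl <;> field_simp
    linear_combination key
  exact ⟨fun s => (ε * deriv f s) ^ (-(1/2) : ℝ),
    fun s => ε * deriv (deriv f) s * (-(1/2) : ℝ) * (ε * deriv f s) ^ (-(1/2) - 1 : ℝ),
    fun s => f s * (ε * deriv f s) ^ (-(1/2) : ℝ),
    fun s => deriv f s * (ε * deriv f s) ^ (-(1/2) : ℝ)
      + f s * (ε * deriv (deriv f) s * (-(1/2) : ℝ) * (ε * deriv f s) ^ (-(1/2) - 1 : ℝ)),
    hupos, hud, hud2, fun _ => rfl, hBd, hBd2, hWr⟩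

/-- Two solutions `f`, `g` of the same Schwarzian equation `S(·) = F` on an open
interval `I` (three times differentiable, with nonvanishing first derivatives)
differ by post-composition with a homographic transformation. -/
theorem schwarzian_solutions_differ_by_homography (I : Set ℝ)
    (hIopen : IsOpen I) (hIord : I.OrdConnected)
    (F f g : ℝ → ℝ)
    (hf1 : ∀ s ∈ I, DifferentiableAt ℝ f s)
    (hf2 : ∀ s ∈ I, DifferentiableAt ℝ (deriv f) s)
    (hf3 : ∀ s ∈ I, DifferentiableAt ℝ (deriv (deriv f)) s)
    (hf' : ∀ s ∈ I, deriv f s ≠ 0)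
    (hg1 : ∀ s ∈ I, DifferentiableAt ℝ g s)
    (hg2 : ∀ s ∈ I, DifferentiableAt ℝ (deriv g) s)
    (hg3 : ∀ s ∈ I, DifferentiableAt ℝ (deriv (deriv g)) s)
    (hg' : ∀ s ∈ I, deriv g s ≠ 0)
    (hSf : ∀ s ∈ I, schwarzian f s = F s)
    (hSg : ∀ s ∈ I, schwarzian g s = F s) :
    ∃ a b c d : ℝ, a * d - b * c ≠ 0 ∧
      ∀ s ∈ I, c * f s + d ≠ 0 ∧ g s = (a * f s + b) / (c * f s + d) := by
  rcases Set.eq_empty_or_nonempty I with rfl | ⟨s₀, hs₀⟩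
  · exact ⟨1, 0, 0, 1, by norm_num, fun s hs => absurd hs (by simp)⟩
  have hconv : Convex ℝ I := hIord.convex
  -- the derivative of a solution has constant sign on `I`
  have sign : ∀ h : ℝ → ℝ, (∀ s ∈ I, DifferentiableAt ℝ (deriv h) s) →
      (∀ s ∈ I, deriv h s ≠ 0) →
      ∃ ε : ℝ, (ε = 1 ∨ ε = -1) ∧ ∀ s ∈ I, 0 < ε * deriv h s := by
    intro h hd2 hne
    have key : ∀ s ∈ I, ∀ t ∈ I, deriv h s < 0 → 0 < deriv h t → False := by
      intro s hs t ht h1 h2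
      have hcont : ContinuousOn (deriv h) (Set.uIcc s t) := fun z hz =>
        ((hd2 z (hIord.uIcc_subset hs ht hz)).continuousAt).continuousWithinAt
      have h0 : (0 : ℝ) ∈ Set.uIcc (deriv h s) (deriv h t) :=
        Set.mem_uIcc.mpr (Or.inl ⟨h1.le, h2.le⟩)
      obtain ⟨z, hz, hz0⟩ := intermediate_value_uIcc hcont h0
      exact hne z (hIord.uIcc_subset hs ht hz) hz0
    rcases (hne s₀ hs₀).lt_or_gt with hneg | hpos
    · refine ⟨-1, Or.inr rfl, fun s hs => ?_⟩
      rcases (hne s hs).lt_or_gt with h1 | h1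
      · nlinarith
      · exact (key s₀ hs₀ s hs hneg h1).elim
    · refine ⟨1, Or.inl rfl, fun s hs => ?_⟩
      rcases (hne s hs).lt_or_gt with h1 | h1
      · exact (key s hs s₀ hs₀ h1 hpos).elim
      · nlinarith
  obtain ⟨εf, hεf, hposf⟩ := sign f hf2 hf'
  obtain ⟨εg, hεg, hposg⟩ := sign g hg2 hg'
  obtain ⟨u, u', B, B', hupos, hud, hud2, hBeq, hBd, hBd2, hWf⟩ :=
    schwarzian_aux hεf hf1 hf2 hf3 hposf hSf
  obtain ⟨v, v', D, D', hvpos, hvd, hvd2, hDeq, hDd, hDd2, hWg⟩ :=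
    schwarzian_aux hεg hg1 hg2 hg3 hposg hSg
  -- Wronskians of solutions of `y'' = -(F/2) y` are constant on `I`
  have wron_const : ∀ y y' z z' : ℝ → ℝ,
      (∀ s ∈ I, HasDerivAt y (y' s) s) → (∀ s ∈ I, HasDerivAt y' (-(F s / 2) * y s) s) →
      (∀ s ∈ I, HasDerivAt z (z' s) s) → (∀ s ∈ I, HasDerivAt z' (-(F s / 2) * z s) s) →
      ∀ s ∈ I, y s * z' s - y' s * z s = y s₀ * z' s₀ - y' s₀ * z s₀ := by
    intro y y' z z' hy hy2 hz hz2 s hs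
    refine const_of_deriv_zero (h := fun t => y t * z' t - y' t * z t) hIopen hconv
      (fun t ht => ?_) hs hs₀
    have hder := ((hy t ht).mul (hz2 t ht)).sub ((hy2 t ht).mul (hz t ht))
    refine hder.congr_deriv ?_
    ring
  have hrepr_v : ∀ s ∈ I, εf * v s = (v s₀ * B' s₀ - v' s₀ * B s₀) * u s
      + (u s₀ * v' s₀ - u' s₀ * v s₀) * B s := by
    intro s hs
    have h1 := wron_const v v' B B' hvd hvd2 hBd hBd2 s hs
    have h2 := wron_const u u' v v' hud hud2 hvd hvd2 s hs
    have h3 := hWf s hs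
    rw [← h1, ← h2, ← h3]
    ring
  have hrepr_D : ∀ s ∈ I, εf * D s = (D s₀ * B' s₀ - D' s₀ * B s₀) * u s
      + (u s₀ * D' s₀ - u' s₀ * D s₀) * B s := by
    intro s hs
    have h1 := wron_const D D' B B' hDd hDd2 hBd hBd2 s hs
    have h2 := wron_const u u' D D' hud hud2 hDd hDd2 s hs
    have h3 := hWf s hs
    rw [← h1, ← h2, ← h3]
    ring
  have hrepr_v' : ∀ s ∈ I, εf * v' s = (v s₀ * B' s₀ - v' s₀ * B s₀) * u' s
      + (u s₀ * v' s₀ - u' s₀ * v s₀) * B' s := by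
    intro s hs
    have h1 : HasDerivAt (fun t => εf * v t) (εf * v' s) s := (hvd s hs).const_mul εf
    have h2 : HasDerivAt (fun t => (v s₀ * B' s₀ - v' s₀ * B s₀) * u t
        + (u s₀ * v' s₀ - u' s₀ * v s₀) * B t)
        ((v s₀ * B' s₀ - v' s₀ * B s₀) * u' s + (u s₀ * v' s₀ - u' s₀ * v s₀) * B' s) s :=
      ((hud s hs).const_mul _).add ((hBd s hs).const_mul _)
    have heq : (fun t => εf * v t) =ᶠ[nhds s] (fun t => (v s₀ * B' s₀ - v' s₀ * B s₀) * u t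
        + (u s₀ * v' s₀ - u' s₀ * v s₀) * B t) := by
      filter_upwards [hIopen.mem_nhds hs] with t ht
      exact hrepr_v t ht
    exact (h2.congr_of_eventuallyEq heq).unique h1 ▸ rfl
  have hrepr_D' : ∀ s ∈ I, εf * D' s = (D s₀ * B' s₀ - D' s₀ * B s₀) * u' s
      + (u s₀ * D' s₀ - u' s₀ * D s₀) * B' s := by
    intro s hs
    have h1 : HasDerivAt (fun t => εf * D t) (εf * D' s) s := (hDd s hs).const_mul εf
    have h2 : HasDerivAt (fun t => (D s₀ * B' s₀ - D' s₀ * B s₀) * u t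
        + (u s₀ * D' s₀ - u' s₀ * D s₀) * B t)
        ((D s₀ * B' s₀ - D' s₀ * B s₀) * u' s + (u s₀ * D' s₀ - u' s₀ * D s₀) * B' s) s :=
      ((hud s hs).const_mul _).add ((hBd s hs).const_mul _)
    have heq : (fun t => εf * D t) =ᶠ[nhds s] (fun t => (D s₀ * B' s₀ - D' s₀ * B s₀) * u t
        + (u s₀ * D' s₀ - u' s₀ * D s₀) * B t) := by
      filter_upwards [hIopen.mem_nhds hs] with t ht
      exact hrepr_D t ht
    exact (h2.congr_of_eventuallyEq heq).unique h1 ▸ rfl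
  refine ⟨u s₀ * D' s₀ - u' s₀ * D s₀, D s₀ * B' s₀ - D' s₀ * B s₀,
    u s₀ * v' s₀ - u' s₀ * v s₀, v s₀ * B' s₀ - v' s₀ * B s₀, ?_, ?_⟩
  · -- determinant
    have h1 := hrepr_v s₀ hs₀
    have h2 := hrepr_v' s₀ hs₀
    have h3 := hrepr_D s₀ hs₀
    have h4 := hrepr_D' s₀ hs₀
    have hWf0 := hWf s₀ hs₀
    have hWg0 := hWg s₀ hs₀
    have s1 : (εf * v s₀) * (εf * D' s₀) - (εf * v' s₀) * (εf * D s₀)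
        = ((v s₀ * B' s₀ - v' s₀ * B s₀) * u s₀ + (u s₀ * v' s₀ - u' s₀ * v s₀) * B s₀)
            * ((D s₀ * B' s₀ - D' s₀ * B s₀) * u' s₀ + (u s₀ * D' s₀ - u' s₀ * D s₀) * B' s₀)
          - ((v s₀ * B' s₀ - v' s₀ * B s₀) * u' s₀ + (u s₀ * v' s₀ - u' s₀ * v s₀) * B' s₀)
            * ((D s₀ * B' s₀ - D' s₀ * B s₀) * u s₀ + (u s₀ * D' s₀ - u' s₀ * D s₀) * B s₀) := by
      rw [h1, h2, h3, h4]
    have s3 : εf * εf * εg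
        = ((u s₀ * D' s₀ - u' s₀ * D s₀) * (v s₀ * B' s₀ - v' s₀ * B s₀)
            - (D s₀ * B' s₀ - D' s₀ * B s₀) * (u s₀ * v' s₀ - u' s₀ * v s₀)) * εf := by
      linear_combination s1 - εf * εf * hWg0
        + ((u s₀ * D' s₀ - u' s₀ * D s₀) * (v s₀ * B' s₀ - v' s₀ * B s₀)
            - (D s₀ * B' s₀ - D' s₀ * B s₀) * (u s₀ * v' s₀ - u' s₀ * v s₀)) * hWf0
    intro h0
    rw [h0] at s3
    rcases hεf with rfl | rfl <;> rcases hεg with rfl | rfl <;> norm_num at s3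
  · intro s hs
    have hu := hupos s hs
    have hv := hvpos s hs
    have hu0 : u s ≠ 0 := ne_of_gt hu
    have hv0 : v s ≠ 0 := ne_of_gt hv
    have hfac : εf * v s = ((u s₀ * v' s₀ - u' s₀ * v s₀) * f s
        + (v s₀ * B' s₀ - v' s₀ * B s₀)) * u s := by
      rw [hrepr_v s hs, hBeq s]; ring
    have hfacD : εf * D s = ((u s₀ * D' s₀ - u' s₀ * D s₀) * f s
        + (D s₀ * B' s₀ - D' s₀ * B s₀)) * u s := by
      rw [hrepr_D s hs, hBeq s]; ring
    have hden : (u s₀ * v' s₀ - u' s₀ * v s₀) * f s + (v s₀ * B' s₀ - v' s₀ * B s₀) ≠ 0 := by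
      intro h0
      rw [h0, zero_mul] at hfac
      rcases hεf with rfl | rfl <;> nlinarith
    refine ⟨hden, ?_⟩
    have hgs : g s = D s / v s := by
      rw [hDeq s]
      field_simp
    rw [hgs, div_eq_div_iff hv0 hden]
    refine mul_left_cancel₀ hu0 ?_
    linear_combination (v s) * hfacD - (D s) * hfac
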